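/- An operator and its formal adjoint with respect to a positive weight have the same principal eigenvalue: let X be a compact interval, β : X×X → ℝ continuous positive, μ, S : X → ℝ continuous positive. Then λ is an eigenvalue of L : φ ↦ φ − ∫ β(·,y) S(y)/μ(y) φ(y) dy with a positive continuous eigenfunction if and only if λ is an eigenvalue of L* : φ ↦ φ − ∫ β(y,·) S(y)/μ(y) φ(y) dy with a positive continuous eigenfunction, and in that case the two eigenvalues are equal. -/

import Mathlib

open MeasureTheory Real Set

open Filter Topology

namespace Stmt13

variable {A : ℝ} {k : ℝ → ℝ → ℝ} {g f φ : ℝ → ℝ}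

lemma sliceR (hkc : ContinuousOn (fun q : ℝ × ℝ => k q.1 q.2) (Icc 0 A ×ˢ Icc 0 A))
    {x : ℝ} (hx : x ∈ Icc (0:ℝ) A) : ContinuousOn (fun y => k y x) (Icc 0 A) :=
  hkc.comp ((continuous_id.prodMk continuous_const).continuousOn) (fun y hy => ⟨hy, hx⟩)

lemma TInt (hkc : ContinuousOn (fun q : ℝ × ℝ => k q.1 q.2) (Icc 0 A ×ˢ Icc 0 A))
    (hg : ContinuousOn g (Icc 0 A)) {x : ℝ} (hx : x ∈ Icc (0:ℝ) A) :
    IntegrableOn (fun y => k y x * g y) (Icc 0 A) :=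
  ((sliceR hkc hx).mul hg).integrableOn_Icc

lemma intPos (hA : 0 < A) (hg : ContinuousOn g (Icc 0 A))
    (hgpos : ∀ x ∈ Icc (0:ℝ) A, 0 < g x) : 0 < ∫ y in Icc (0:ℝ) A, g y := by
  have hne : (Icc (0:ℝ) A).Nonempty := nonempty_Icc.2 hA.le
  obtain ⟨z, hz, hzmin⟩ := isCompact_Icc.exists_isMinOn hne hg
  have hε : 0 < g z := hgpos z hz
  have h1 : ∫ _y in Icc (0:ℝ) A, g z ≤ ∫ y in Icc (0:ℝ) A, g y :=
    setIntegral_mono_on (integrableOn_const (by simp [Real.volume_Icc]))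
      hg.integrableOn_Icc measurableSet_Icc (fun y hy => hzmin hy)
  have h2 : ∫ _y in Icc (0:ℝ) A, g z = A * g z := by
    simp [Real.volume_Icc, ENNReal.toReal_ofReal hA.le, smul_eq_mul, hA.le]
  nlinarith [mul_pos hA hε]

lemma Tcont (hA : 0 < A) (hkc : ContinuousOn (fun q : ℝ × ℝ => k q.1 q.2) (Icc 0 A ×ˢ Icc 0 A))
    (hg : ContinuousOn g (Icc 0 A)) :
    ContinuousOn (fun x => ∫ y in Icc (0:ℝ) A, k y x * g y) (Icc 0 A) := by
  have hne : (Icc (0:ℝ) A).Nonempty := nonempty_Icc.2 hA.le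
  have hne' : (Icc (0:ℝ) A ×ˢ Icc (0:ℝ) A).Nonempty := hne.prod hne
  obtain ⟨q2, _, hq2max⟩ :=
    (isCompact_Icc.prod isCompact_Icc).exists_isMaxOn hne' hkc.norm
  obtain ⟨zg, _, hzgmax⟩ := isCompact_Icc.exists_isMaxOn hne hg.norm
  set C2 : ℝ := ‖k q2.1 q2.2‖ with hC2
  set Mg : ℝ := ‖g zg‖ with hMg
  intro x₀ hx₀
  apply continuousWithinAt_of_dominated (bound := fun _ => C2 * Mg)
  · filter_upwards [self_mem_nhdsWithin] with x hx
    exact (((sliceR hkc hx).mul hg).aestronglyMeasurable measurableSet_Icc)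
  · filter_upwards [self_mem_nhdsWithin] with x hx
    filter_upwards [ae_restrict_mem measurableSet_Icc] with y hy
    have h1 : ‖k y x‖ ≤ C2 := hq2max (Set.mk_mem_prod hy hx)
    have h2 : ‖g y‖ ≤ Mg := hzgmax hy
    calc ‖k y x * g y‖ = ‖k y x‖ * ‖g y‖ := norm_mul _ _
      _ ≤ C2 * Mg := mul_le_mul h1 h2 (norm_nonneg _) ((norm_nonneg _).trans h1)
  · exact integrableOn_const (by simp [Real.volume_Icc])
  · filter_upwards [ae_restrict_mem measurableSet_Icc] with y hy
    exact ((hkc.comp ((continuous_const.prodMk continuous_id).continuousOn)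
      (fun x hx => ⟨hy, hx⟩)).mul continuousOn_const) x₀ hx₀

/-- linearity helper : T (f - a•g) = T f - a * T g -/
lemma Tsub (hkc : ContinuousOn (fun q : ℝ × ℝ => k q.1 q.2) (Icc 0 A ×ˢ Icc 0 A))
    (hf : ContinuousOn f (Icc 0 A)) (hg : ContinuousOn g (Icc 0 A)) (a : ℝ)
    {x : ℝ} (hx : x ∈ Icc (0:ℝ) A) :
    ∫ y in Icc (0:ℝ) A, k y x * (f y - a * g y)
      = (∫ y in Icc (0:ℝ) A, k y x * f y) - a * ∫ y in Icc (0:ℝ) A, k y x * g y := by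
  have h1 : (∫ y in Icc (0:ℝ) A, k y x * (f y - a * g y))
      = ∫ y in Icc (0:ℝ) A, (k y x * f y - a * (k y x * g y)) := by
    refine setIntegral_congr_fun measurableSet_Icc (fun y _ => ?_); ring
  rw [h1, integral_sub (TInt hkc hf hx) ((TInt hkc hg hx).const_mul a), integral_const_mul]

/-- monotonicity helper -/
lemma Tmono (hkc : ContinuousOn (fun q : ℝ × ℝ => k q.1 q.2) (Icc 0 A ×ˢ Icc 0 A))
    (hknn : ∀ x ∈ Icc (0:ℝ) A, ∀ y ∈ Icc (0:ℝ) A, 0 ≤ k x y)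
    (hf : ContinuousOn f (Icc 0 A)) (hg : ContinuousOn g (Icc 0 A))
    (hle : ∀ y ∈ Icc (0:ℝ) A, f y ≤ g y) {x : ℝ} (hx : x ∈ Icc (0:ℝ) A) :
    (∫ y in Icc (0:ℝ) A, k y x * f y) ≤ ∫ y in Icc (0:ℝ) A, k y x * g y :=
  setIntegral_mono_on (TInt hkc hf hx) (TInt hkc hg hx) measurableSet_Icc
    (fun y hy => mul_le_mul_of_nonneg_left (hle y hy) (hknn y hy x hx))

end Stmt13

namespace Stmt13

variable {A : ℝ} {k : ℝ → ℝ → ℝ} {g f w φ : ℝ → ℝ} {c1 c2 : ℝ}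

/-- δ-comparability of the operator on nonnegative inputs. -/
lemma Tcomp (hkc : ContinuousOn (fun q : ℝ × ℝ => k q.1 q.2) (Icc 0 A ×ˢ Icc 0 A))
    (hc1 : 0 < c1) (hc2 : 0 < c2)
    (hlb : ∀ x ∈ Icc (0:ℝ) A, ∀ y ∈ Icc (0:ℝ) A, c1 ≤ k x y)
    (hub : ∀ x ∈ Icc (0:ℝ) A, ∀ y ∈ Icc (0:ℝ) A, k x y ≤ c2)
    (hw : ContinuousOn w (Icc 0 A)) (hwnn : ∀ y ∈ Icc (0:ℝ) A, 0 ≤ w y)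
    {x x' : ℝ} (hx : x ∈ Icc (0:ℝ) A) (hx' : x' ∈ Icc (0:ℝ) A) :
    (c1/c2) * (∫ y in Icc (0:ℝ) A, k y x * w y) ≤ ∫ y in Icc (0:ℝ) A, k y x' * w y := by
  rw [← integral_const_mul]
  refine setIntegral_mono_on ((TInt hkc hw hx).const_mul _) (TInt hkc hw hx')
    measurableSet_Icc (fun y hy => ?_)
  have h1 : (c1/c2) * k y x ≤ c1 := by
    have := hub y hy x hx
    rw [div_mul_eq_mul_div, div_le_iff₀ hc2]
    nlinarith
  have h2 : c1 ≤ k y x' := hlb y hy x' hx'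
  have h3 : 0 ≤ w y := hwnn y hy
  calc c1/c2 * (k y x * w y) = ((c1/c2) * k y x) * w y := by ring
    _ ≤ k y x' * w y := mul_le_mul_of_nonneg_right (h1.trans h2) h3

lemma pairing (hkc : ContinuousOn (fun q : ℝ × ℝ => k q.1 q.2) (Icc 0 A ×ˢ Icc 0 A))
    (hg : ContinuousOn g (Icc 0 A)) (hφ : ContinuousOn φ (Icc 0 A)) :
    ∫ x in Icc (0:ℝ) A, (∫ y in Icc (0:ℝ) A, k y x * g y) * φ x
      = ∫ y in Icc (0:ℝ) A, g y * ∫ x in Icc (0:ℝ) A, k y x * φ x := by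
  have hF : ContinuousOn (fun p : ℝ × ℝ => k p.2 p.1 * g p.2 * φ p.1)
      (Icc 0 A ×ˢ Icc 0 A) := by
    have hswap : ContinuousOn (fun p : ℝ × ℝ => k p.2 p.1) (Icc 0 A ×ˢ Icc 0 A) := by
      exact hkc.comp continuous_swap.continuousOn
        (fun p hp => ⟨hp.2, hp.1⟩)
    exact (hswap.mul (hg.comp continuous_snd.continuousOn (fun p hp => hp.2))).mul
      (hφ.comp continuous_fst.continuousOn (fun p hp => hp.1))
  have hInt : Integrable (Function.uncurry fun x y => k y x * g y * φ x)
      ((volume.restrict (Icc (0:ℝ) A)).prod (volume.restrict (Icc (0:ℝ) A))) := by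
    rw [Measure.prod_restrict]
    have h1 : IntegrableOn (fun p : ℝ × ℝ => k p.2 p.1 * g p.2 * φ p.1)
        (Icc 0 A ×ˢ Icc 0 A) (volume : Measure (ℝ × ℝ)) :=
      hF.integrableOn_compact (isCompact_Icc.prod isCompact_Icc)
    rw [Measure.volume_eq_prod] at h1
    exact h1
  have hswap := integral_integral_swap hInt
  calc ∫ x in Icc (0:ℝ) A, (∫ y in Icc (0:ℝ) A, k y x * g y) * φ x
      = ∫ x in Icc (0:ℝ) A, ∫ y in Icc (0:ℝ) A, k y x * g y * φ x := by
        refine setIntegral_congr_fun measurableSet_Icc (fun x _ => ?_)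
        rw [← integral_mul_const]
    _ = ∫ y in Icc (0:ℝ) A, ∫ x in Icc (0:ℝ) A, k y x * g y * φ x := hswap
    _ = ∫ y in Icc (0:ℝ) A, g y * ∫ x in Icc (0:ℝ) A, k y x * φ x := by
        refine setIntegral_congr_fun measurableSet_Icc (fun y _ => ?_)
        rw [← integral_const_mul]
        refine setIntegral_congr_fun measurableSet_Icc (fun x _ => ?_)
        ring


/-- Core contraction step. -/
lemma core (hA : 0 < A)
    (hkc : ContinuousOn (fun q : ℝ × ℝ => k q.1 q.2) (Icc 0 A ×ˢ Icc 0 A))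
    (hc1 : 0 < c1) (hc2 : 0 < c2)
    (hlb : ∀ x ∈ Icc (0:ℝ) A, ∀ y ∈ Icc (0:ℝ) A, c1 ≤ k x y)
    (hub : ∀ x ∈ Icc (0:ℝ) A, ∀ y ∈ Icc (0:ℝ) A, k x y ≤ c2)
    (hf : ContinuousOn f (Icc 0 A)) (hg : ContinuousOn g (Icc 0 A))
    (hgpos : ∀ x ∈ Icc (0:ℝ) A, 0 < g x) (a b : ℝ)
    (hab : ∀ x ∈ Icc (0:ℝ) A, a * g x ≤ f x ∧ f x ≤ b * g x) :
    ∃ a' b', (∀ x ∈ Icc (0:ℝ) A,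
        a' * (∫ y in Icc (0:ℝ) A, k y x * g y) ≤ (∫ y in Icc (0:ℝ) A, k y x * f y) ∧
        (∫ y in Icc (0:ℝ) A, k y x * f y) ≤ b' * (∫ y in Icc (0:ℝ) A, k y x * g y)) ∧
      0 ≤ b' - a' ∧ b' - a' ≤ (1 - (c1/c2)^2) * (b - a) := by
  set δ := c1/c2 with hδdef
  have hδ : 0 < δ := div_pos hc1 hc2
  have hknn : ∀ x ∈ Icc (0:ℝ) A, ∀ y ∈ Icc (0:ℝ) A, 0 ≤ k x y :=
    fun x hx y hy => (hc1.trans_le (hlb x hx y hy)).le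
  have hkpos : ∀ x ∈ Icc (0:ℝ) A, ∀ y ∈ Icc (0:ℝ) A, 0 < k x y :=
    fun x hx y hy => hc1.trans_le (hlb x hx y hy)
  have hne : (Icc (0:ℝ) A).Nonempty := nonempty_Icc.2 hA.le
  set Tf : ℝ → ℝ := fun x => ∫ y in Icc (0:ℝ) A, k y x * f y with hTfdef
  set Tg : ℝ → ℝ := fun x => ∫ y in Icc (0:ℝ) A, k y x * g y with hTgdef
  have hTg : ∀ x ∈ Icc (0:ℝ) A, 0 < Tg x := fun x hx =>
    intPos hA ((sliceR hkc hx).mul hg) (fun y hy => mul_pos (hkpos y hy x hx) (hgpos y hy))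
  have hq : ContinuousOn (fun x => Tf x / Tg x) (Icc 0 A) :=
    (Tcont hA hkc hf).div (Tcont hA hkc hg) (fun x hx => (hTg x hx).ne')
  obtain ⟨xM, hxM, hmax'⟩ := isCompact_Icc.exists_isMaxOn hne hq
  obtain ⟨xm, hxm, hmin'⟩ := isCompact_Icc.exists_isMinOn hne hq
  have hmax : ∀ x ∈ Icc (0:ℝ) A, Tf x / Tg x ≤ Tf xM / Tg xM :=
    fun x hx => isMaxOn_iff.1 hmax' x hx
  have hmin : ∀ x ∈ Icc (0:ℝ) A, Tf xm / Tg xm ≤ Tf x / Tg x :=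
    fun x hx => isMinOn_iff.1 hmin' x hx
  refine ⟨Tf xm / Tg xm, Tf xM / Tg xM, fun x hx => ?_, ?_, ?_⟩
  · exact ⟨(le_div_iff₀ (hTg x hx)).1 (hmin x hx),
      (div_le_iff₀ (hTg x hx)).1 (hmax x hx)⟩
  · have h := hmin xM hxM
    linarith
  · -- the contraction estimate
    have habl : ∀ x ∈ Icc (0:ℝ) A, a * g x ≤ f x := fun x hx => (hab x hx).1
    have habu : ∀ x ∈ Icc (0:ℝ) A, f x ≤ b * g x := fun x hx => (hab x hx).2
    set w : ℝ → ℝ := fun y => f y - a * g y with hwdef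
    have hw : ContinuousOn w (Icc 0 A) := hf.sub (continuousOn_const.mul hg)
    have hwnn : ∀ y ∈ Icc (0:ℝ) A, 0 ≤ w y := fun y hy => by
      have := habl y hy; simp only [hwdef]; linarith
    set s : ℝ := Tf xM - a * Tg xM with hsdef
    set s' : ℝ := Tf xm - a * Tg xm with hs'def
    set t : ℝ := Tg xM with htdef
    set t' : ℝ := Tg xm with ht'def
    have ht : 0 < t := hTg xM hxM
    have ht' : 0 < t' := hTg xm hxm
    have hTw : ∀ x, x ∈ Icc (0:ℝ) A →
        (∫ y in Icc (0:ℝ) A, k y x * w y) = Tf x - a * Tg x := fun x hx =>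
      Tsub hkc hf hg a hx
    have hδs : δ * s ≤ s' := by
      have h := Tcomp hkc hc1 hc2 hlb hub hw hwnn hxM hxm
      rw [hTw xM hxM, hTw xm hxm] at h
      exact h
    have hδt : δ * t' ≤ t :=
      Tcomp hkc hc1 hc2 hlb hub hg (fun y hy => (hgpos y hy).le) hxm hxM
    have hs : 0 ≤ s := by
      have h1 := hTw xM hxM
      have h2 : 0 ≤ ∫ y in Icc (0:ℝ) A, k y xM * w y :=
        setIntegral_nonneg measurableSet_Icc
          (fun y hy => mul_nonneg (hknn y hy xM hxM) (hwnn y hy))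
      linarith
    have hs' : 0 ≤ s' := by
      have h1 := hTw xm hxm
      have h2 : 0 ≤ ∫ y in Icc (0:ℝ) A, k y xm * w y :=
        setIntegral_nonneg measurableSet_Icc
          (fun y hy => mul_nonneg (hknn y hy xm hxm) (hwnn y hy))
      linarith
    have hsbt : s ≤ (b - a) * t := by
      have h0 : (∫ y in Icc (0:ℝ) A, k y xM * (b * g y)) = b * Tg xM := by
        rw [show (∫ y in Icc (0:ℝ) A, k y xM * (b * g y))
            = ∫ y in Icc (0:ℝ) A, b * (k y xM * g y) from
          setIntegral_congr_fun measurableSet_Icc (fun y _ => by ring),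
          integral_const_mul]
      have h1 := Tmono (g := fun y => b * g y) hkc hknn hf (continuousOn_const.mul hg) habu hxM
      rw [h0] at h1
      simp only [hsdef, htdef]; linarith
    have hδ1 : δ ≤ 1 := by
      have h00 : (0:ℝ) ∈ Icc (0:ℝ) A := ⟨le_refl _, hA.le⟩
      rw [hδdef, div_le_one hc2]
      linarith [hlb 0 h00 0 h00, hub 0 h00 0 h00]
    have key : s * t' - s' * t ≤ (1 - δ^2) * (b - a) * (t * t') := by
      nlinarith [mul_nonneg (sub_nonneg.2 hδs) ht.le,
        mul_nonneg (mul_nonneg hδ.le hs) (sub_nonneg.2 hδt),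
        mul_nonneg (mul_nonneg (by nlinarith : (0:ℝ) ≤ 1 - δ^2) ht'.le) (sub_nonneg.2 hsbt),
        mul_pos ht ht']
    have heq : Tf xM / Tg xM - Tf xm / Tg xm = (s * t' - s' * t) / (t * t') := by
      rw [div_sub_div _ _ (hTg xM hxM).ne' (hTg xm hxm).ne', hsdef, hs'def, htdef, ht'def]
      ring
    rw [heq, div_le_iff₀ (mul_pos ht ht')]
    exact key

end Stmt13

namespace Stmt13

noncomputable def iter (A r : ℝ) (k : ℝ → ℝ → ℝ) : ℕ → ℝ → ℝ
  | 0 => fun _ => 1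
  | n+1 => fun x => r⁻¹ * ∫ y in Icc (0:ℝ) A, k y x * iter A r k n y

theorem adjoint_eigen (A : ℝ) (hA : 0 < A) (k : ℝ → ℝ → ℝ) (r : ℝ)
    (hkc : ContinuousOn (fun q : ℝ × ℝ => k q.1 q.2) (Icc 0 A ×ˢ Icc 0 A))
    (hkpos : ∀ x ∈ Icc (0:ℝ) A, ∀ y ∈ Icc (0:ℝ) A, 0 < k x y)
    (φ : ℝ → ℝ) (hφc : ContinuousOn φ (Icc 0 A)) (hφpos : ∀ x ∈ Icc (0:ℝ) A, 0 < φ x)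
    (hφeq : ∀ x ∈ Icc (0:ℝ) A, (∫ y in Icc (0:ℝ) A, k x y * φ y) = r * φ x) :
    ∃ ψ : ℝ → ℝ, ContinuousOn ψ (Icc 0 A) ∧ (∀ x ∈ Icc (0:ℝ) A, 0 < ψ x) ∧
      ∀ x ∈ Icc (0:ℝ) A, (∫ y in Icc (0:ℝ) A, k y x * ψ y) = r * ψ x := by
  have h00 : (0:ℝ) ∈ Icc (0:ℝ) A := ⟨le_refl _, hA.le⟩
  have hne : (Icc (0:ℝ) A).Nonempty := nonempty_Icc.2 hA.le
  have hne' : (Icc (0:ℝ) A ×ˢ Icc (0:ℝ) A).Nonempty := hne.prod hne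
  -- kernel bounds
  obtain ⟨qm, hqm, hqmin⟩ := (isCompact_Icc.prod isCompact_Icc).exists_isMinOn hne' hkc
  obtain ⟨qM, hqM, hqmax⟩ := (isCompact_Icc.prod isCompact_Icc).exists_isMaxOn hne' hkc
  set c1 : ℝ := k qm.1 qm.2 with hc1def
  set c2 : ℝ := k qM.1 qM.2 with hc2def
  have hc1 : 0 < c1 := hkpos qm.1 hqm.1 qm.2 hqm.2
  have hlb : ∀ x ∈ Icc (0:ℝ) A, ∀ y ∈ Icc (0:ℝ) A, c1 ≤ k x y :=
    fun x hx y hy => hqmin (Set.mk_mem_prod hx hy)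
  have hub : ∀ x ∈ Icc (0:ℝ) A, ∀ y ∈ Icc (0:ℝ) A, k x y ≤ c2 :=
    fun x hx y hy => hqmax (Set.mk_mem_prod hx hy)
  have hc2 : 0 < c2 := hc1.trans_le (hlb qM.1 hqM.1 qM.2 hqM.2)
  set δ : ℝ := c1/c2 with hδdef
  have hδ : 0 < δ := div_pos hc1 hc2
  have hδ1 : δ ≤ 1 := by
    rw [hδdef, div_le_one hc2]
    exact (hlb 0 h00 0 h00).trans (hub 0 h00 0 h00)
  set θ : ℝ := 1 - δ^2 with hθdef
  have hθnn : 0 ≤ θ := by nlinarith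
  have hθ1 : θ < 1 := by nlinarith
  have hknn : ∀ x ∈ Icc (0:ℝ) A, ∀ y ∈ Icc (0:ℝ) A, 0 ≤ k x y :=
    fun x hx y hy => (hkpos x hx y hy).le
  -- r > 0
  have hr : 0 < r := by
    have h1 : 0 < ∫ y in Icc (0:ℝ) A, k 0 y * φ y :=
      intPos hA ((hkc.comp ((continuous_const.prodMk continuous_id).continuousOn)
        (fun y hy => ⟨h00, hy⟩)).mul hφc)
        (fun y hy => mul_pos (hkpos 0 h00 y hy) (hφpos y hy))
    have h2 := hφeq 0 h00
    nlinarith [hφpos 0 h00]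
  set u : ℕ → ℝ → ℝ := iter A r k with hudef
  have huS : ∀ n x, u (n+1) x = r⁻¹ * ∫ y in Icc (0:ℝ) A, k y x * u n y := fun n x => rfl
  -- continuity and positivity of iterates
  have good : ∀ n, ContinuousOn (u n) (Icc 0 A) ∧ ∀ x ∈ Icc (0:ℝ) A, 0 < u n x := by
    intro n
    induction n with
    | zero => exact ⟨continuousOn_const, fun x _ => one_pos⟩
    | succ n ih =>
      constructor
      · exact continuousOn_const.mul (Tcont hA hkc ih.1)
      · intro x hx
        have hT : 0 < ∫ y in Icc (0:ℝ) A, k y x * u n y :=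
          intPos hA ((sliceR hkc hx).mul ih.1)
            (fun y hy => mul_pos (hkpos y hy x hx) (ih.2 y hy))
        exact mul_pos (inv_pos.2 hr) hT
  -- pairing invariant
  set P : ℝ := ∫ x in Icc (0:ℝ) A, φ x with hPdef
  have hP : 0 < P := intPos hA hφc hφpos
  have hpairT : ∀ g : ℝ → ℝ, ContinuousOn g (Icc 0 A) →
      (∫ x in Icc (0:ℝ) A, (∫ y in Icc (0:ℝ) A, k y x * g y) * φ x)
        = r * ∫ y in Icc (0:ℝ) A, g y * φ y := by
    intro g hg
    rw [pairing hkc hg hφc]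
    rw [show (∫ y in Icc (0:ℝ) A, g y * ∫ x in Icc (0:ℝ) A, k y x * φ x)
        = ∫ y in Icc (0:ℝ) A, r * (g y * φ y) from
      setIntegral_congr_fun measurableSet_Icc (fun y hy => by
        rw [hφeq y hy]; ring), integral_const_mul]
  have hpair : ∀ n, (∫ y in Icc (0:ℝ) A, u n y * φ y) = P := by
    intro n
    induction n with
    | zero =>
      rw [hPdef]
      exact setIntegral_congr_fun measurableSet_Icc (fun y _ => one_mul _)
    | succ n ih =>
      have h1 : (∫ y in Icc (0:ℝ) A, u (n+1) y * φ y)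
          = ∫ y in Icc (0:ℝ) A, r⁻¹ * ((∫ z in Icc (0:ℝ) A, k z y * u n z) * φ y) :=
        setIntegral_congr_fun measurableSet_Icc (fun y _ => by rw [huS]; ring)
      rw [h1, integral_const_mul, hpairT (u n) (good n).1, ← mul_assoc,
        inv_mul_cancel₀ hr.ne', one_mul, ih]
  -- comparability of iterates
  have comp : ∀ n, ∀ x ∈ Icc (0:ℝ) A, ∀ x' ∈ Icc (0:ℝ) A,
      δ * u (n+1) x ≤ u (n+1) x' := by
    intro n x hx x' hx'
    have h := Tcomp (w := u n) hkc hc1 hc2 hlb hub (good n).1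
      (fun y hy => ((good n).2 y hy).le) hx hx'
    have h2 := mul_le_mul_of_nonneg_left h (inv_nonneg.2 hr.le)
    rw [huS, huS]
    calc δ * (r⁻¹ * ∫ y in Icc (0:ℝ) A, k y x * u n y)
        = r⁻¹ * (δ * ∫ y in Icc (0:ℝ) A, k y x * u n y) := by ring
      _ ≤ r⁻¹ * ∫ y in Icc (0:ℝ) A, k y x' * u n y := h2
  -- uniform bounds on iterates
  have hbnd : ∀ n, ∀ x ∈ Icc (0:ℝ) A, δ ≤ u (n+1) x ∧ u (n+1) x ≤ δ⁻¹ := by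
    intro n x hx
    have hcont := (good (n+1)).1
    constructor
    · -- lower bound
      have hmono : (∫ x' in Icc (0:ℝ) A, δ * u (n+1) x' * φ x')
          ≤ ∫ x' in Icc (0:ℝ) A, u (n+1) x * φ x' := by
        refine setIntegral_mono_on ?_ ?_ measurableSet_Icc (fun x' hx' => ?_)
        · exact ((continuousOn_const.mul hcont).mul hφc).integrableOn_Icc
        · exact (continuousOn_const.mul hφc).integrableOn_Icc
        · exact mul_le_mul_of_nonneg_right (comp n x' hx' x hx) (hφpos x' hx').le
      have hL : (∫ x' in Icc (0:ℝ) A, δ * u (n+1) x' * φ x') = δ * P := by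
        rw [show (∫ x' in Icc (0:ℝ) A, δ * u (n+1) x' * φ x')
            = ∫ x' in Icc (0:ℝ) A, δ * (u (n+1) x' * φ x') from
          setIntegral_congr_fun measurableSet_Icc (fun y _ => by ring),
          integral_const_mul, hpair (n+1)]
      have hR : (∫ x' in Icc (0:ℝ) A, u (n+1) x * φ x') = u (n+1) x * P := by
        rw [integral_const_mul]
      rw [hL, hR] at hmono
      nlinarith
    · -- upper bound
      have hmono : (∫ x' in Icc (0:ℝ) A, δ * u (n+1) x * φ x')
          ≤ ∫ x' in Icc (0:ℝ) A, u (n+1) x' * φ x' := by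
        refine setIntegral_mono_on ?_ ?_ measurableSet_Icc (fun x' hx' => ?_)
        · exact (continuousOn_const.mul hφc).integrableOn_Icc
        · exact (hcont.mul hφc).integrableOn_Icc
        · exact mul_le_mul_of_nonneg_right (comp n x hx x' hx') (hφpos x' hx').le
      have hL : (∫ x' in Icc (0:ℝ) A, δ * u (n+1) x * φ x') = δ * u (n+1) x * P := by
        rw [integral_const_mul]
      rw [hL, hpair (n+1)] at hmono
      rw [show δ⁻¹ = 1/δ from (one_div δ).symm, le_div_iff₀ hδ]
      nlinarith
  -- helper: integrate an inequality against φ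
  have intφ : ∀ (f1 f2 : ℝ → ℝ), ContinuousOn f1 (Icc 0 A) → ContinuousOn f2 (Icc 0 A) →
      (∀ y ∈ Icc (0:ℝ) A, f1 y ≤ f2 y) →
      (∫ y in Icc (0:ℝ) A, f1 y * φ y) ≤ ∫ y in Icc (0:ℝ) A, f2 y * φ y := by
    intro f1 f2 h1 h2 hle
    refine setIntegral_mono_on (h1.mul hφc).integrableOn_Icc (h2.mul hφc).integrableOn_Icc
      measurableSet_Icc (fun y hy => mul_le_mul_of_nonneg_right (hle y hy) (hφpos y hy).le)
  -- geometric contraction of ratio intervals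
  set C : ℝ := δ⁻¹ * δ⁻¹ with hCdef
  have rat : ∀ p n, ∃ a b, (∀ x ∈ Icc (0:ℝ) A,
      a * u (n+1) x ≤ u (n+1+p) x ∧ u (n+1+p) x ≤ b * u (n+1) x) ∧
      0 ≤ b - a ∧ b - a ≤ θ^n * C := by
    intro p n
    induction n with
    | zero =>
      have hC : 0 < C := by rw [hCdef]; positivity
      refine ⟨0, C, fun x hx => ⟨?_, ?_⟩, by linarith, by simp⟩
      · have := (good (0+1+p)).2 x hx
        nlinarith
      · have h1 := (hbnd (0+p) x hx).2
        have h2 := (hbnd 0 x hx).1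
        have h3 : (0:ℕ)+1+p = 0+p+1 := by omega
        rw [h3]
        have hinv : δ⁻¹ * δ = 1 := inv_mul_cancel₀ hδ.ne'
        calc u (0+p+1) x ≤ δ⁻¹ := h1
          _ = C * δ := by rw [hCdef]; field_simp
          _ ≤ C * u (0+1) x := by
            refine mul_le_mul_of_nonneg_left h2 (by positivity)
    | succ n ih =>
      obtain ⟨a, b, hab, hba0, hba⟩ := ih
      obtain ⟨a', b', hab', hba0', hba'⟩ :=
        core hA hkc hc1 hc2 hlb hub (good (n+1+p)).1 (good (n+1)).1
          (good (n+1)).2 a b hab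
      refine ⟨a', b', fun x hx => ?_, hba0', ?_⟩
      · have h := hab' x hx
        have hidx : n+1+1+p = n+1+p+1 := by omega
        rw [hidx, huS (n+1+p) x, huS (n+1) x]
        constructor
        · have h3 := mul_le_mul_of_nonneg_left h.1 (inv_nonneg.2 hr.le)
          calc a' * (r⁻¹ * ∫ y in Icc (0:ℝ) A, k y x * u (n+1) y)
              = r⁻¹ * (a' * ∫ y in Icc (0:ℝ) A, k y x * u (n+1) y) := by ring
            _ ≤ r⁻¹ * ∫ y in Icc (0:ℝ) A, k y x * u (n+1+p) y := h3
        · have h3 := mul_le_mul_of_nonneg_left h.2 (inv_nonneg.2 hr.le)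
          calc r⁻¹ * ∫ y in Icc (0:ℝ) A, k y x * u (n+1+p) y
              ≤ r⁻¹ * (b' * ∫ y in Icc (0:ℝ) A, k y x * u (n+1) y) := h3
            _ = b' * (r⁻¹ * ∫ y in Icc (0:ℝ) A, k y x * u (n+1) y) := by ring
      · calc b' - a' ≤ (1 - (c1/c2)^2) * (b - a) := hba'
          _ = θ * (b - a) := by rw [hθdef, hδdef]
          _ ≤ θ * (θ^n * C) := mul_le_mul_of_nonneg_left hba hθnn
          _ = θ^(n+1) * C := by ring
  -- positioning: a ≤ 1 ≤ b via the pairing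
  set K : ℝ := C * δ⁻¹ with hKdef
  have cauchyBound : ∀ p n, ∀ x ∈ Icc (0:ℝ) A,
      |u (n+1+p) x - u (n+1) x| ≤ θ^n * K := by
    intro p n x hx
    obtain ⟨a, b, hab, hba0, hba⟩ := rat p n
    have ha1 : a ≤ 1 := by
      have h1 := intφ (fun y => a * u (n+1) y) (u (n+1+p))
        (continuousOn_const.mul (good (n+1)).1) (good (n+1+p)).1
        (fun y hy => (hab y hy).1)
      rw [show (∫ y in Icc (0:ℝ) A, a * u (n+1) y * φ y)
          = ∫ y in Icc (0:ℝ) A, a * (u (n+1) y * φ y) from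
        setIntegral_congr_fun measurableSet_Icc (fun y _ => by ring),
        integral_const_mul, hpair (n+1), hpair (n+1+p)] at h1
      nlinarith
    have hb1 : 1 ≤ b := by
      have h1 := intφ (u (n+1+p)) (fun y => b * u (n+1) y) (good (n+1+p)).1
        (continuousOn_const.mul (good (n+1)).1) (fun y hy => (hab y hy).2)
      rw [show (∫ y in Icc (0:ℝ) A, b * u (n+1) y * φ y)
          = ∫ y in Icc (0:ℝ) A, b * (u (n+1) y * φ y) from
        setIntegral_congr_fun measurableSet_Icc (fun y _ => by ring),
        integral_const_mul, hpair (n+1), hpair (n+1+p)] at h1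
      nlinarith
    have hux := hbnd n x hx
    have hu0 : 0 ≤ u (n+1) x := ((good (n+1)).2 x hx).le
    have h1 := (hab x hx).1
    have h2 := (hab x hx).2
    have hQnn : 0 ≤ θ^n * C := by
      have hC : 0 < C := by rw [hCdef]; positivity
      positivity
    have hup : u (n+1+p) x - u (n+1) x ≤ θ^n * K := by
      have e1 : u (n+1+p) x - u (n+1) x ≤ (b - 1) * u (n+1) x := by nlinarith
      have e2 : (b - 1) * u (n+1) x ≤ (θ^n * C) * δ⁻¹ :=
        mul_le_mul (by linarith) hux.2 hu0 hQnn
      have e3 : (θ^n * C) * δ⁻¹ = θ^n * K := by rw [hKdef]; ring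
      linarith
    have hdown : u (n+1) x - u (n+1+p) x ≤ θ^n * K := by
      have e1 : u (n+1) x - u (n+1+p) x ≤ (1 - a) * u (n+1) x := by nlinarith
      have e2 : (1 - a) * u (n+1) x ≤ (θ^n * C) * δ⁻¹ :=
        mul_le_mul (by linarith) hux.2 hu0 hQnn
      have e3 : (θ^n * C) * δ⁻¹ = θ^n * K := by rw [hKdef]; ring
      linarith
    rw [abs_le]
    exact ⟨by linarith, by linarith⟩
  -- the sequence converges pointwise
  have conv : ∀ x, ∃ L, x ∈ Icc (0:ℝ) A → Tendsto (fun n => u (n+1) x) atTop (𝓝 L) := by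
    intro x
    by_cases hx : x ∈ Icc (0:ℝ) A
    · have hc : CauchySeq (fun n => u (n+1) x) := by
        apply cauchySeq_of_le_geometric θ K hθ1
        intro n
        have := cauchyBound 1 n x hx
        rw [Real.dist_eq, abs_sub_comm]
        have hidx : n+1+1 = n+1+1 := rfl
        calc |u (n+1+1) x - u (n+1) x| ≤ θ^n * K := this
          _ = K * θ^n := by ring
      obtain ⟨L, hL⟩ := cauchySeq_tendsto_of_complete hc
      exact ⟨L, fun _ => hL⟩
    · exact ⟨0, fun hx' => absurd hx' hx⟩
  choose ψ hψ using conv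
  -- uniform approximation
  have unif : ∀ n, ∀ x ∈ Icc (0:ℝ) A, |ψ x - u (n+1) x| ≤ θ^n * K := by
    intro n x hx
    have hshift : Tendsto (fun p => u (n+1+p) x) atTop (𝓝 (ψ x)) := by
      have h1 := (hψ x hx).comp (tendsto_add_atTop_nat n)
      have h2 : ((fun m => u (m+1) x) ∘ (fun p => p + n)) = fun p => u (n+1+p) x := by
        funext p
        simp only [Function.comp_apply]
        congr 1
        omega
      rwa [h2] at h1
    have htend : Tendsto (fun p => |u (n+1+p) x - u (n+1) x|) atTop
        (𝓝 (|ψ x - u (n+1) x|)) := ((hshift.sub tendsto_const_nhds).abs)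
    exact le_of_tendsto htend (Eventually.of_forall (fun p => cauchyBound p n x hx))
  -- properties of ψ
  have hψlb : ∀ x ∈ Icc (0:ℝ) A, δ ≤ ψ x := fun x hx =>
    ge_of_tendsto (hψ x hx) (Eventually.of_forall (fun n => (hbnd n x hx).1))
  have hψub : ∀ x ∈ Icc (0:ℝ) A, ψ x ≤ δ⁻¹ := fun x hx =>
    le_of_tendsto (hψ x hx) (Eventually.of_forall (fun n => (hbnd n x hx).2))
  have hψpos : ∀ x ∈ Icc (0:ℝ) A, 0 < ψ x := fun x hx => hδ.trans_le (hψlb x hx)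
  have hKtend : Tendsto (fun n : ℕ => θ^n * K) atTop (𝓝 0) := by
    have h1 := (tendsto_pow_atTop_nhds_zero_of_lt_one hθnn hθ1).mul_const K
    simpa using h1
  have hunif : TendstoUniformlyOn (fun n x => u (n+1) x) ψ atTop (Icc 0 A) := by
    rw [Metric.tendstoUniformlyOn_iff]
    intro ε hε
    filter_upwards [hKtend.eventually (gt_mem_nhds hε)] with n hn x hx
    rw [Real.dist_eq]
    exact lt_of_le_of_lt (unif n x hx) hn
  have hψc : ContinuousOn ψ (Icc 0 A) :=
    hunif.continuousOn (Eventually.of_forall (fun n => (good (n+1)).1)).frequently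
  -- pass to the limit in the fixed point equation
  refine ⟨ψ, hψc, hψpos, fun x hx => ?_⟩
  have h1 : Tendsto (fun n => ∫ y in Icc (0:ℝ) A, k y x * u (n+1) y) atTop
      (𝓝 (∫ y in Icc (0:ℝ) A, k y x * ψ y)) := by
    apply tendsto_integral_of_dominated_convergence (fun _ => c2 * δ⁻¹)
    · exact fun n => (((sliceR hkc hx).mul (good (n+1)).1).aestronglyMeasurable
        measurableSet_Icc)
    · exact integrableOn_const (by simp [Real.volume_Icc])
    · intro n
      filter_upwards [ae_restrict_mem measurableSet_Icc] with y hy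
      have hb := hbnd n y hy
      have hk1 := hknn y hy x hx
      have hk2 := hub y hy x hx
      rw [Real.norm_eq_abs, abs_mul, abs_of_nonneg hk1, abs_of_nonneg (hδ.le.trans hb.1)]
      exact mul_le_mul hk2 hb.2 (hδ.le.trans hb.1) hc2.le
    · filter_upwards [ae_restrict_mem measurableSet_Icc] with y hy
      exact (hψ y hy).const_mul (k y x)
  have h2 : Tendsto (fun n => ∫ y in Icc (0:ℝ) A, k y x * u (n+1) y) atTop
      (𝓝 (r * ψ x)) := by
    have heq : (fun n => ∫ y in Icc (0:ℝ) A, k y x * u (n+1) y)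
        = fun n => r * u (n+1+1) x := by
      funext n
      rw [huS (n+1) x, ← mul_assoc, mul_inv_cancel₀ hr.ne', one_mul]
    rw [heq]
    have h3 : Tendsto (fun n => u (n+1+1) x) atTop (𝓝 (ψ x)) :=
      (hψ x hx).comp (tendsto_add_atTop_nat 1)
    exact h3.const_mul r
  exact tendsto_nhds_unique h1 h2

end Stmt13

/-- The operator `L : φ ↦ φ − ∫ β(·,y) S(y)/μ(y) φ(y) dy` and its formal adjoint
`L* : φ ↦ φ − ∫ β(y,·) S(y)/μ(y) φ(y) dy` have the same eigenvalue with positive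
continuous eigenfunction. -/
theorem stmt13 (A : ℝ) (hA : 0 < A) (β : ℝ → ℝ → ℝ) (μ S : ℝ → ℝ) (lam : ℝ)
    (hβc : ContinuousOn (fun q : ℝ × ℝ => β q.1 q.2) (Set.Icc 0 A ×ˢ Set.Icc 0 A))
    (hβpos : ∀ x ∈ Set.Icc (0:ℝ) A, ∀ y ∈ Set.Icc (0:ℝ) A, 0 < β x y)
    (hμc : ContinuousOn μ (Set.Icc 0 A)) (hμpos : ∀ x ∈ Set.Icc (0:ℝ) A, 0 < μ x)
    (hSc : ContinuousOn S (Set.Icc 0 A)) (hSpos : ∀ x ∈ Set.Icc (0:ℝ) A, 0 < S x) :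
    (∃ φ : ℝ → ℝ, ContinuousOn φ (Set.Icc 0 A) ∧ (∀ x ∈ Set.Icc (0:ℝ) A, 0 < φ x) ∧
      ∀ x ∈ Set.Icc (0:ℝ) A,
        φ x - (∫ y in Set.Icc (0:ℝ) A, β x y * S y / μ y * φ y) = lam * φ x) ↔
    (∃ ψ : ℝ → ℝ, ContinuousOn ψ (Set.Icc 0 A) ∧ (∀ x ∈ Set.Icc (0:ℝ) A, 0 < ψ x) ∧
      ∀ x ∈ Set.Icc (0:ℝ) A,
        ψ x - (∫ y in Set.Icc (0:ℝ) A, β y x * S y / μ y * ψ y) = lam * ψ x) := by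
  have hμne : ∀ x ∈ Set.Icc (0:ℝ) A, μ x ≠ 0 := fun x hx => (hμpos x hx).ne'
  have hSne : ∀ x ∈ Set.Icc (0:ℝ) A, S x ≠ 0 := fun x hx => (hSpos x hx).ne'
  constructor
  · rintro ⟨φ, hφc, hφpos, hφeq⟩
    set k : ℝ → ℝ → ℝ := fun x y => β x y * S y / μ y with hkdef
    have hkc : ContinuousOn (fun q : ℝ × ℝ => k q.1 q.2) (Icc 0 A ×ˢ Icc 0 A) := by
      exact (hβc.mul (hSc.comp continuous_snd.continuousOn (fun q hq => hq.2))).div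
        (hμc.comp continuous_snd.continuousOn (fun q hq => hq.2))
        (fun q hq => hμne q.2 hq.2)
    have hkpos : ∀ x ∈ Icc (0:ℝ) A, ∀ y ∈ Icc (0:ℝ) A, 0 < k x y := fun x hx y hy => by
      have := hβpos x hx y hy; have := hSpos y hy; have := hμpos y hy
      rw [hkdef]; positivity
    have hφeq' : ∀ x ∈ Icc (0:ℝ) A,
        (∫ y in Icc (0:ℝ) A, k x y * φ y) = (1 - lam) * φ x := by
      intro x hx
      have := hφeq x hx
      have h2 : (∫ y in Icc (0:ℝ) A, k x y * φ y)
          = ∫ y in Icc (0:ℝ) A, β x y * S y / μ y * φ y := rfl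
      rw [h2]; linarith
    obtain ⟨ψ, hψc, hψpos, hψeq⟩ := Stmt13.adjoint_eigen A hA k (1 - lam) hkc hkpos φ hφc hφpos hφeq'
    refine ⟨fun y => ψ y * μ y / S y, (hψc.mul hμc).div hSc hSne, fun x hx => by
      have := hψpos x hx; have := hμpos x hx; have := hSpos x hx; positivity,
      fun x hx => ?_⟩
    have hE := hψeq x hx
    have h1 : (∫ y in Icc (0:ℝ) A, k y x * ψ y)
        = (S x / μ x) * ∫ y in Icc (0:ℝ) A, β y x * ψ y := by
      rw [← integral_const_mul]
      exact setIntegral_congr_fun measurableSet_Icc (fun y _ => by rw [hkdef]; ring)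
    have h2 : (∫ y in Icc (0:ℝ) A, β y x * S y / μ y * (ψ y * μ y / S y))
        = ∫ y in Icc (0:ℝ) A, β y x * ψ y :=
      setIntegral_congr_fun measurableSet_Icc (fun y hy => by
        have h1 := hμne y hy; have h2 := hSne y hy
        field_simp)
    rw [h2]
    rw [h1] at hE
    have hμx := hμpos x hx; have hSx := hSpos x hx
    have h3 : (∫ y in Icc (0:ℝ) A, β y x * ψ y) = (1 - lam) * ψ x * μ x / S x := by
      field_simp at hE ⊢
      linarith [hE]
    rw [h3]
    field_simp
    ring
  · rintro ⟨ψ, hψc, hψpos, hψeq⟩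
    set k : ℝ → ℝ → ℝ := fun x y => β y x * S y / μ y with hkdef
    have hkc : ContinuousOn (fun q : ℝ × ℝ => k q.1 q.2) (Icc 0 A ×ˢ Icc 0 A) := by
      have hswap : ContinuousOn (fun q : ℝ × ℝ => β q.2 q.1) (Icc 0 A ×ˢ Icc 0 A) :=
        hβc.comp continuous_swap.continuousOn (fun q hq => ⟨hq.2, hq.1⟩)
      exact (hswap.mul (hSc.comp continuous_snd.continuousOn (fun q hq => hq.2))).div
        (hμc.comp continuous_snd.continuousOn (fun q hq => hq.2))
        (fun q hq => hμne q.2 hq.2)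
    have hkpos : ∀ x ∈ Icc (0:ℝ) A, ∀ y ∈ Icc (0:ℝ) A, 0 < k x y := fun x hx y hy => by
      have := hβpos y hy x hx; have := hSpos y hy; have := hμpos y hy
      rw [hkdef]; positivity
    have hψeq' : ∀ x ∈ Icc (0:ℝ) A,
        (∫ y in Icc (0:ℝ) A, k x y * ψ y) = (1 - lam) * ψ x := by
      intro x hx
      have := hψeq x hx
      have h2 : (∫ y in Icc (0:ℝ) A, k x y * ψ y)
          = ∫ y in Icc (0:ℝ) A, β y x * S y / μ y * ψ y := rfl
      rw [h2]; linarith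
    obtain ⟨χ, hχc, hχpos, hχeq⟩ := Stmt13.adjoint_eigen A hA k (1 - lam) hkc hkpos ψ hψc hψpos hψeq'
    refine ⟨fun y => χ y * μ y / S y, (hχc.mul hμc).div hSc hSne, fun x hx => by
      have := hχpos x hx; have := hμpos x hx; have := hSpos x hx; positivity,
      fun x hx => ?_⟩
    have hE := hχeq x hx
    have h1 : (∫ y in Icc (0:ℝ) A, k y x * χ y)
        = (S x / μ x) * ∫ y in Icc (0:ℝ) A, β x y * χ y := by
      rw [← integral_const_mul]
      exact setIntegral_congr_fun measurableSet_Icc (fun y _ => by rw [hkdef]; ring)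
    have h2 : (∫ y in Icc (0:ℝ) A, β x y * S y / μ y * (χ y * μ y / S y))
        = ∫ y in Icc (0:ℝ) A, β x y * χ y :=
      setIntegral_congr_fun measurableSet_Icc (fun y hy => by
        have h1 := hμne y hy; have h2 := hSne y hy
        field_simp)
    rw [h2]
    rw [h1] at hE
    have hμx := hμpos x hx; have hSx := hSpos x hx
    have h3 : (∫ y in Icc (0:ℝ) A, β x y * χ y) = (1 - lam) * χ x * μ x / S x := by
      field_simp at hE ⊢
      linarith [hE]
    rw [h3]
    field_simp
    ring
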